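/- Invertibility away from the origin of the suspended Dirac-type family: if (t,τ) ∈ ℝ² with (t,τ) ≠ (0,0), then D(t,τ) is invertible, i.e. it is a bijection of H₁ × H₂ with bounded inverse, regardless of whether T is invertible. -/

import Mathlib

/-!
STATEMENT 6: Invertibility away from the origin of the suspended Dirac-type family:
if `(t,τ) ≠ (0,0)` then `D(t,τ)(x,y) = ((it − τ)x + T*y, Tx + (it + τ)y)` is
invertible on `H₁ × H₂`, regardless of whether `T` is invertible.
-/

noncomputable section

open ContinuousLinearMap

variable {H₁ H₂ : Type*}
  [NormedAddCommGroup H₁] [InnerProductSpace ℂ H₁] [CompleteSpace H₁]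
  [NormedAddCommGroup H₂] [InnerProductSpace ℂ H₂] [CompleteSpace H₂]

/-- The doubly suspended Dirac-type family
`D(t,τ)(x,y) = ((it − τ)·x + T*y, T x + (it + τ)·y)` on `H₁ × H₂`. -/
def suspendedDirac (T : H₁ →L[ℂ] H₂) (t τ : ℝ) : (H₁ × H₂) →L[ℂ] (H₁ × H₂) :=
  (((Complex.I * t - τ) • ContinuousLinearMap.fst ℂ H₁ H₂) +
      (ContinuousLinearMap.adjoint T).comp (ContinuousLinearMap.snd ℂ H₁ H₂)).prod
    ((T.comp (ContinuousLinearMap.fst ℂ H₁ H₂)) +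
      ((Complex.I * t + τ) • ContinuousLinearMap.snd ℂ H₁ H₂))

/-- A positive operator plus a positive multiple of the identity is invertible. -/
lemma aux_isUnit_pos {H : Type*} [NormedAddCommGroup H] [InnerProductSpace ℂ H]
    [CompleteSpace H] {S : H →L[ℂ] H} (hS : S.IsPositive) {c : ℝ} (hc : 0 < c) :
    IsUnit (S + (c : ℂ) • 1) := by
  have hne : (-c : ℂ) ∉ spectrum ℂ S := by
    intro hm
    rw [← hS.isSelfAdjoint.spectrumRestricts.algebraMap_image] at hm
    obtain ⟨x, hx, hx'⟩ := hm
    have hx0 : 0 ≤ x :=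
      spectrum_nonneg_of_nonneg ((ContinuousLinearMap.nonneg_iff_isPositive S).mpr hS) hx
    have hxc : (x : ℂ) = (-c : ℂ) := hx'
    have : x = -c := by exact_mod_cast hxc
    linarith
  have hu := spectrum.notMem_iff.mp hne
  rw [Algebra.algebraMap_eq_smul_one] at hu
  have h2 : S + (c : ℂ) • 1 = -((-c : ℂ) • 1 - S) := by module
  rw [h2]
  exact hu.neg

/-- The product of invertible operators under `prodMap` is invertible. -/
lemma aux_isUnit_prodMap {M N : Type*}
    [NormedAddCommGroup M] [NormedSpace ℂ M] [NormedAddCommGroup N] [NormedSpace ℂ N]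
    {f : M →L[ℂ] M} {g : N →L[ℂ] N} (hf : IsUnit f) (hg : IsUnit g) :
    IsUnit (f.prodMap g) := by
  obtain ⟨f', hf1, hf2⟩ := isUnit_iff_exists.mp hf
  obtain ⟨g', hg1, hg2⟩ := isUnit_iff_exists.mp hg
  have hf1' : ∀ x, f (f' x) = x := fun x => by
    simpa [ContinuousLinearMap.mul_apply] using DFunLike.congr_fun hf1 x
  have hf2' : ∀ x, f' (f x) = x := fun x => by
    simpa [ContinuousLinearMap.mul_apply] using DFunLike.congr_fun hf2 x
  have hg1' : ∀ x, g (g' x) = x := fun x => by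
    simpa [ContinuousLinearMap.mul_apply] using DFunLike.congr_fun hg1 x
  have hg2' : ∀ x, g' (g x) = x := fun x => by
    simpa [ContinuousLinearMap.mul_apply] using DFunLike.congr_fun hg2 x
  refine isUnit_iff_exists.mpr ⟨f'.prodMap g', ?_, ?_⟩ <;>
    ext z <;>
      simp [ContinuousLinearMap.mul_apply, coe_prodMap', hf1', hf2', hg1', hg2']

/-- The key algebraic identity: `D(-t,τ) ∘ D(t,τ)` is block diagonal
`(T*T + (t²+τ²), TT* + (t²+τ²))`. -/
lemma suspendedDirac_mul (T : H₁ →L[ℂ] H₂) (t τ : ℝ) :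
    suspendedDirac T (-t) τ * suspendedDirac T t τ =
      ((ContinuousLinearMap.adjoint T).comp T + ((t^2 + τ^2 : ℝ) : ℂ) • 1).prodMap
        (T.comp (ContinuousLinearMap.adjoint T) + ((t^2 + τ^2 : ℝ) : ℂ) • 1) := by
  ext z <;>
    simp only [suspendedDirac, ContinuousLinearMap.mul_apply, coe_comp', Function.comp_apply,
      inl_apply, inr_apply, prod_apply, add_apply, coe_smul', Pi.smul_apply, coe_fst', coe_snd',
      coe_prodMap', Prod.map_apply, map_add, map_smul, map_zero, smul_zero, add_zero, zero_add,
      ContinuousLinearMap.one_apply, smul_smul]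
  all_goals
    match_scalars <;> (push_cast; ring_nf; try simp [Complex.I_sq]; try ring_nf)

theorem suspendedDirac_isUnit_of_ne_zero (T : H₁ →L[ℂ] H₂) (t τ : ℝ)
    (h : (t, τ) ≠ (0, 0)) :
    IsUnit (suspendedDirac T t τ) := by
  have hc : 0 < t ^ 2 + τ ^ 2 := by
    rcases (not_and_or.mp (fun hh : t = 0 ∧ τ = 0 => h (by simp [hh.1, hh.2]))) with ht | hτ
    · positivity
    · positivity
  -- the two diagonal blocks are invertible
  have hposA : ((ContinuousLinearMap.adjoint T).comp T).IsPositive := by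
    simpa [ContinuousLinearMap.one_def] using (ContinuousLinearMap.isPositive_one (E := H₂)).adjoint_conj T
  have hposB : (T.comp (ContinuousLinearMap.adjoint T)).IsPositive := by
    simpa [ContinuousLinearMap.one_def] using (ContinuousLinearMap.isPositive_one (E := H₁)).conj_adjoint T
  have hA := aux_isUnit_pos hposA hc
  have hB := aux_isUnit_pos hposB hc
  have hS : IsUnit
      (((ContinuousLinearMap.adjoint T).comp T + ((t^2 + τ^2 : ℝ) : ℂ) • 1).prodMap
        (T.comp (ContinuousLinearMap.adjoint T) + ((t^2 + τ^2 : ℝ) : ℂ) • 1)) :=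
    aux_isUnit_prodMap hA hB
  obtain ⟨Si, hS1, hS2⟩ := isUnit_iff_exists.mp hS
  set D := suspendedDirac T t τ with hDdef
  set D' := suspendedDirac T (-t) τ with hD'def
  have hDD : D' * D = _ := suspendedDirac_mul T t τ
  have hDD2 : D * D' =
      ((ContinuousLinearMap.adjoint T).comp T + ((t^2 + τ^2 : ℝ) : ℂ) • 1).prodMap
        (T.comp (ContinuousLinearMap.adjoint T) + ((t^2 + τ^2 : ℝ) : ℂ) • 1) := by
    have h2 := suspendedDirac_mul T (-t) τ
    rwa [neg_neg, neg_sq] at h2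
  -- right inverse
  have hr : D * (D' * Si) = 1 := by rw [← mul_assoc, hDD2, hS1]
  -- left inverse
  have hl : (Si * D') * D = 1 := by rw [mul_assoc, hDD, hS2]
  have hlr : D' * Si = Si * D' := by
    calc D' * Si = 1 * (D' * Si) := (one_mul _).symm
      _ = ((Si * D') * D) * (D' * Si) := by rw [hl]
      _ = (Si * D') * (D * (D' * Si)) := by rw [mul_assoc]
      _ = (Si * D') * 1 := by rw [hr]
      _ = Si * D' := mul_one _
  exact isUnit_iff_exists.mpr ⟨D' * Si, hr, by rw [hlr, hl]⟩

end
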